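/- Marginal cross-term bound (second estimate in the proof of the junta learning lemma): let α, β be finite types, let χ : Matrix (α × β) (α × β) ℂ be positive semidefinite, and let Z : Finset β. Then ∑_{a, b : α} ‖∑_{z ∈ Z} χ (a,z) (b,z)‖² ≤ (∑_{a : α} ∑_{z ∈ Z} re(χ (a,z) (a,z)))². -/

import Mathlib

open Finset ComplexOrder

theorem marginal_cross_term_bound {α β : Type*} [Fintype α] [Fintype β]
    (χ : Matrix (α × β) (α × β) ℂ) (hpsd : χ.PosSemidef) (Z : Finset β) :
    ∑ a : α, ∑ b : α, ‖∑ z ∈ Z, χ (a, z) (b, z)‖ ^ 2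
      ≤ (∑ a : α, ∑ z ∈ Z, (χ (a, z) (a, z)).re) ^ 2 := by
  classical
  -- The marginal matrix
  let M : Matrix α α ℂ := fun a b => ∑ z ∈ Z, χ (a, z) (b, z)
  have hMpsd : M.PosSemidef := by
    refine Matrix.PosSemidef.of_dotProduct_mulVec_nonneg ?_ ?_
    · refine Matrix.IsHermitian.ext fun a b => ?_
      show star (∑ z ∈ Z, χ (b, z) (a, z)) = ∑ z ∈ Z, χ (a, z) (b, z)
      rw [star_sum]
      exact Finset.sum_congr rfl fun z _ => hpsd.1.apply (a, z) (b, z)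
    · intro x
      let y : β → (α × β) → ℂ := fun z p => if p.2 = z then x p.1 else 0
      have key : dotProduct (star x) (M.mulVec x)
          = ∑ z ∈ Z, dotProduct (star (y z)) (χ.mulVec (y z)) := by
        have lhs : dotProduct (star x) (M.mulVec x)
            = ∑ a : α, ∑ b : α, ∑ z ∈ Z, star (x a) * χ (a, z) (b, z) * x b := by
          simp [dotProduct, Matrix.mulVec, M, Finset.mul_sum,
            Finset.sum_mul, mul_assoc, mul_comm, mul_left_comm]
        have rhs : ∀ z ∈ Z, dotProduct (star (y z)) (χ.mulVec (y z))
            = ∑ a : α, ∑ b : α, star (x a) * χ (a, z) (b, z) * x b := by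
          intro z hz
          simp [dotProduct, Matrix.mulVec, y, Fintype.sum_prod_type,
            apply_ite (starRingEnd ℂ), mul_ite, ite_mul, Finset.mul_sum,
            Finset.sum_mul, Finset.sum_ite_eq', mul_assoc]
        rw [lhs, Finset.sum_congr rfl rhs]
        exact (Finset.sum_congr rfl fun a _ => Finset.sum_comm).trans
          Finset.sum_comm
      rw [key]
      exact Finset.sum_nonneg fun z _ => hpsd.dotProduct_mulVec_nonneg _
  open scoped MatrixOrder in
  obtain ⟨B, hB⟩ := CStarAlgebra.nonneg_iff_eq_star_mul_self.mp hMpsd.nonneg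
  -- columns of B as vectors in EuclideanSpace
  let u : α → EuclideanSpace ℂ α := fun a => WithLp.toLp 2 (fun i => B i a)
  have hMab : ∀ a b, M a b = inner ℂ (u a) (u b) := by
    intro a b
    rw [hB]
    simp [Matrix.mul_apply, EuclideanSpace.inner_eq_star_dotProduct,
      dotProduct, u, mul_comm]
  have hdiag : ∀ a, (M a a).re = ‖u a‖ ^ 2 := by
    intro a
    rw [hMab a a]
    exact_mod_cast congrArg Complex.re (inner_self_eq_norm_sq_to_K (𝕜 := ℂ) (u a))
  calc ∑ a : α, ∑ b : α, ‖∑ z ∈ Z, χ (a, z) (b, z)‖ ^ 2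
      ≤ ∑ a : α, ∑ b : α, ‖u a‖ ^ 2 * ‖u b‖ ^ 2 := by
        refine Finset.sum_le_sum fun a _ => Finset.sum_le_sum fun b _ => ?_
        have h1 : (∑ z ∈ Z, χ (a, z) (b, z)) = inner ℂ (u a) (u b) := hMab a b
        rw [h1]
        calc ‖(inner ℂ (u a) (u b) : ℂ)‖ ^ 2 ≤ (‖u a‖ * ‖u b‖) ^ 2 :=
              pow_le_pow_left₀ (norm_nonneg _) (norm_inner_le_norm (𝕜 := ℂ) _ _) 2
          _ = ‖u a‖ ^ 2 * ‖u b‖ ^ 2 := by ring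
    _ = (∑ a : α, ‖u a‖ ^ 2) ^ 2 := by rw [sq, Finset.sum_mul_sum]
    _ = (∑ a : α, ∑ z ∈ Z, (χ (a, z) (a, z)).re) ^ 2 := by
        congr 1
        refine Finset.sum_congr rfl fun a _ => ?_
        rw [← hdiag a]
        exact (Complex.re_sum Z _).symm ▸ rfl
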